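/- arXiv:2506.13946 — 2 statements merged into one kernel-verified Lean document; each statement's English description precedes it below -/
import Mathlib

section
/- Under the contraction assumption ℓ_F < 1, the map μ ↦ μP is a contraction on the space 𝒫(Z) of probability measures on Z with respect to the L¹-Wasserstein distance: W(μ₁P, μ₂P) ≤ ℓ_F · W(μ₁, μ₂) for all μ₁, μ₂ ∈ 𝒫(Z). -/
open MeasureTheory Pointwise

/-- The L¹-Wasserstein distance: infimum over couplings of the expected distance. -/
noncomputable def wassersteinDist {Z : Type*} [MeasurableSpace Z] [PseudoMetricSpace Z]
    (μ ν : Measure Z) : ℝ :=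
  sInf { x | ∃ γ : Measure (Z × Z), IsProbabilityMeasure γ ∧ γ.fst = μ ∧ γ.snd = ν ∧
    x = ∫ p, dist p.1 p.2 ∂γ }

/-- One step of the chain: the law of `F z ϑ` when `z ∼ μ` and `ϑ ∼ ν` are independent. -/
noncomputable def stepMeasure {Z Θ : Type*} [MeasurableSpace Z] [MeasurableSpace Θ]
    (F : Z → Θ → Z) (ν : Measure Θ) (μ : Measure Z) : Measure Z :=
  (μ.prod ν).map (fun p => F p.1 p.2)

/-- under the contraction assumption `ℓ_F < 1`, the map `μ ↦ μP` is a
contraction on probability measures with respect to the L¹-Wasserstein distance. -/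
theorem stmt2
    {Z Θ : Type*} [MeasurableSpace Z] [MetricSpace Z] [BorelSpace Z]
    [CompleteSpace Z] [TopologicalSpace.SeparableSpace Z] [MeasurableSpace Θ]
    (hdbdd : ∀ z z' : Z, dist z z' ≤ 1)
    (F : Z → Θ → Z) (hF : Measurable (Function.uncurry F))
    (ℓ : Θ → ℝ) (hℓmeas : Measurable ℓ) (hℓnonneg : ∀ θ, 0 ≤ ℓ θ)
    (ν : Measure Θ) [IsProbabilityMeasure ν] (hℓint : Integrable ℓ ν)
    (ℓF : ℝ) (hℓF : ℓF = ∫ θ, ℓ θ ∂ν) (hcontr : ℓF < 1)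
    (hlip : ∀ (z z' : Z) (θ : Θ), dist (F z θ) (F z' θ) ≤ ℓ θ * dist z z') :
    ∀ μ₁ μ₂ : Measure Z, IsProbabilityMeasure μ₁ → IsProbabilityMeasure μ₂ →
      wassersteinDist (stepMeasure F ν μ₁) (stepMeasure F ν μ₂)
        ≤ ℓF * wassersteinDist μ₁ μ₂ := by
  intro μ₁ μ₂ hμ₁ hμ₂
  have hℓF0 : 0 ≤ ℓF := hℓF ▸ integral_nonneg hℓnonneg
  set S : Set ℝ := { x | ∃ γ : Measure (Z × Z), IsProbabilityMeasure γ ∧ γ.fst = μ₁ ∧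
      γ.snd = μ₂ ∧ x = ∫ p, dist p.1 p.2 ∂γ } with hS
  have hSne : S.Nonempty := by
    refine ⟨∫ p, dist p.1 p.2 ∂(μ₁.prod μ₂), μ₁.prod μ₂, by infer_instance, ?_, ?_, rfl⟩
    · simp [Measure.fst_prod]
    · simp [Measure.snd_prod]
  -- measurability of the distance function
  have hdistm : Continuous (fun p : Z × Z => dist p.1 p.2) := continuous_dist
  -- key step: for every coupling γ of μ₁, μ₂, the Wasserstein distance of the images is
  -- bounded by ℓF times the cost of γ.
  have key : ∀ x ∈ S, wassersteinDist (stepMeasure F ν μ₁) (stepMeasure F ν μ₂) ≤ ℓF * x := by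
    rintro x ⟨γ, hγ, hγ1, hγ2, rfl⟩
    -- the coupling of the images
    set G : (Z × Z) × Θ → Z × Z := fun p => (F p.1.1 p.2, F p.1.2 p.2) with hG
    have hG1 : Measurable (fun p : (Z × Z) × Θ => F p.1.1 p.2) :=
      hF.comp (measurable_fst.fst.prodMk measurable_snd)
    have hG2 : Measurable (fun p : (Z × Z) × Θ => F p.1.2 p.2) :=
      hF.comp (measurable_fst.snd.prodMk measurable_snd)
    have hGm : Measurable G := hG1.prodMk hG2
    set η : Measure (Z × Z) := (γ.prod ν).map G with hη
    have hηprob : IsProbabilityMeasure η := Measure.isProbabilityMeasure_map hGm.aemeasurable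
    have hF' : Measurable (fun p : Z × Θ => F p.1 p.2) := hF
    have h1 : (γ.map Prod.fst).prod ν = (γ.prod ν).map (Prod.map Prod.fst id) := by
      rw [← Measure.map_prod_map γ ν measurable_fst measurable_id, Measure.map_id]
    have h2 : (γ.map Prod.snd).prod ν = (γ.prod ν).map (Prod.map Prod.snd id) := by
      rw [← Measure.map_prod_map γ ν measurable_snd measurable_id, Measure.map_id]
    have hfst : η.fst = stepMeasure F ν μ₁ := by
      rw [hη, Measure.fst, Measure.map_map measurable_fst hGm, stepMeasure, ← hγ1,
        Measure.fst, h1, Measure.map_map hF' (measurable_fst.prodMap measurable_id)]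
      rfl
    have hsnd : η.snd = stepMeasure F ν μ₂ := by
      rw [hη, Measure.snd, Measure.map_map measurable_snd hGm, stepMeasure, ← hγ2,
        Measure.snd, h2, Measure.map_map hF' (measurable_snd.prodMap measurable_id)]
      rfl
    have hηint : ∫ p, dist p.1 p.2 ∂η
        = ∫ p : (Z × Z) × Θ, dist (F p.1.1 p.2) (F p.1.2 p.2) ∂(γ.prod ν) := by
      rw [hη, integral_map hGm.aemeasurable
        (hdistm.stronglyMeasurable.aestronglyMeasurable)]
    -- integrability facts
    have hint1 : Integrable (fun p : (Z × Z) × Θ => dist (F p.1.1 p.2) (F p.1.2 p.2))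
        (γ.prod ν) := by
      refine ⟨((hdistm.measurable.comp hGm).aestronglyMeasurable), ?_⟩
      refine (hasFiniteIntegral_const (1 : ℝ)).mono' ?_
      filter_upwards with p
      rw [Real.norm_eq_abs, abs_of_nonneg dist_nonneg]
      exact hdbdd _ _
    have hdint : Integrable (fun p : Z × Z => dist p.1 p.2) γ := by
      refine ⟨hdistm.measurable.aestronglyMeasurable, ?_⟩
      refine (hasFiniteIntegral_const (1 : ℝ)).mono' ?_
      filter_upwards with p
      rw [Real.norm_eq_abs, abs_of_nonneg dist_nonneg]
      exact hdbdd _ _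
    have hint2 : Integrable (fun p : (Z × Z) × Θ => dist p.1.1 p.1.2 * ℓ p.2) (γ.prod ν) :=
      hdint.mul_prod hℓint
    have hmono : ∫ p : (Z × Z) × Θ, dist (F p.1.1 p.2) (F p.1.2 p.2) ∂(γ.prod ν)
        ≤ ∫ p : (Z × Z) × Θ, dist p.1.1 p.1.2 * ℓ p.2 ∂(γ.prod ν) := by
      refine integral_mono hint1 hint2 fun p => ?_
      rw [mul_comm]
      exact hlip _ _ _
    have hprod : ∫ p : (Z × Z) × Θ, dist p.1.1 p.1.2 * ℓ p.2 ∂(γ.prod ν)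
        = (∫ p : Z × Z, dist p.1 p.2 ∂γ) * ∫ θ, ℓ θ ∂ν :=
      integral_prod_mul (fun p : Z × Z => dist p.1 p.2) ℓ
    have hSle : wassersteinDist (stepMeasure F ν μ₁) (stepMeasure F ν μ₂)
        ≤ ∫ p, dist p.1 p.2 ∂η := by
      refine csInf_le ⟨0, ?_⟩ ⟨η, hηprob, hfst, hsnd, rfl⟩
      rintro y ⟨κ, hκ, -, -, rfl⟩
      exact integral_nonneg fun p => dist_nonneg
    calc wassersteinDist (stepMeasure F ν μ₁) (stepMeasure F ν μ₂)
        ≤ ∫ p, dist p.1 p.2 ∂η := hSle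
      _ ≤ (∫ p : Z × Z, dist p.1 p.2 ∂γ) * ∫ θ, ℓ θ ∂ν := by
          rw [hηint, ← hprod]; exact hmono
      _ = ℓF * ∫ p : Z × Z, dist p.1 p.2 ∂γ := by rw [hℓF, mul_comm]
  -- conclude using properties of sInf
  have : wassersteinDist (stepMeasure F ν μ₁) (stepMeasure F ν μ₂) ≤ sInf (ℓF • S) := by
    refine le_csInf (hSne.smul_set) ?_
    rintro y ⟨x, hx, rfl⟩
    exact key x hx
  rwa [Real.sInf_smul_of_nonneg hℓF0 S] at this
end

section
/- Under assumptions (A1) and (A2), the function z ↦ E^z[φ(Z₀,…,Z_{n−1})], where φ(z₁,…,zₙ) = sup_{h∈ℋ}|(1/n)∑ᵢℒ_h(zᵢ) − π(ℒ_h)|, is Lipschitz on Z with Lipschitz constant at most ℓ_ℋ. -/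
open MeasureTheory ProbabilityTheory Finset

/-- auxiliary: the sup of two families whose terms are uniformly `c`-close are `c`-close. -/
lemma abs_ciSup_sub_ciSup_le {H : Type*} [Nonempty H] {A B : H → ℝ} {c : ℝ}
    (hA : BddAbove (Set.range A)) (hB : BddAbove (Set.range B))
    (hc : ∀ h, |A h - B h| ≤ c) : |(⨆ h, A h) - ⨆ h, B h| ≤ c := by
  rw [abs_sub_le_iff]
  constructor
  · rw [sub_le_iff_le_add]
    refine ciSup_le fun h => ?_
    have h1 := (abs_sub_le_iff.mp (hc h)).1
    have h2 : B h ≤ ⨆ h, B h := le_ciSup hB h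
    linarith
  · rw [sub_le_iff_le_add]
    refine ciSup_le fun h => ?_
    have h1 := (abs_sub_le_iff.mp (hc h)).2
    have h2 : A h ≤ ⨆ h, A h := le_ciSup hA h
    linarith

/-- under (A1) and (A2) the map `z ↦ E^z[φ(Z₀,…,Z_{n−1})]`, where
`φ(z₁,…,zₙ) = sup_h |(1/n)∑ᵢ ℒ_h(zᵢ) − π(ℒ_h)|` and the chain starts at the deterministic
point `z`, is Lipschitz with constant at most `ℓ_ℋ`. -/
theorem stmt6
    {Ω Z Θ H : Type*} [MeasurableSpace Ω] [MeasurableSpace Z] [MetricSpace Z]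
    [BorelSpace Z] [CompleteSpace Z] [TopologicalSpace.SeparableSpace Z]
    [MeasurableSpace Θ] [Nonempty H]
    (P : Measure Ω) [IsProbabilityMeasure P]
    (hdbdd : ∀ z z' : Z, dist z z' ≤ 1)
    -- the governing function and assumption (A1)
    (F : Z → Θ → Z) (hF : Measurable (Function.uncurry F))
    (ℓ : Θ → ℝ) (hℓmeas : Measurable ℓ) (hℓnonneg : ∀ θ, 0 ≤ ℓ θ)
    (ν : Measure Θ) [IsProbabilityMeasure ν] (hℓint : Integrable ℓ ν)
    (ℓF : ℝ) (hℓF : ℓF = ∫ θ, ℓ θ ∂ν) (hcontr : ℓF < 1)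
    (hlip : ∀ (z z' : Z) (θ : Θ), dist (F z θ) (F z' θ) ≤ ℓ θ * dist z z')
    -- the i.i.d. innovations ϑ₀, ϑ₁, …, with common law ν
    (ϑ : ℕ → Ω → Θ) (hϑmeas : ∀ i, Measurable (ϑ i))
    (hϑlaw : ∀ i, P.map (ϑ i) = ν)
    (hϑindep : iIndepFun ϑ P)
    -- the chain started at the deterministic point `z`
    (itr : Z → ℕ → Ω → Z) (hitr0 : ∀ z ω, itr z 0 ω = z)
    (hitrrec : ∀ z k ω, itr z (k + 1) ω = F (itr z k ω) (ϑ k ω))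
    -- the invariant probability measure π
    (π : Measure Z) [IsProbabilityMeasure π] (hπinv : stepMeasure F ν π = π)
    -- assumption (A2) on the losses
    (L : H → Z → ℝ) (ℓH : ℝ) (hℓHpos : 0 < ℓH)
    (hLmeas : ∀ h, Measurable (L h))
    (hLbdd : ∀ h z, L h z ∈ Set.Icc 0 ℓH)
    (hLlip : ∀ h z z', |L h z - L h z'| ≤ ℓH * dist z z')
    (n : ℕ) (hn : 0 < n)
    -- `g z = E^z[φ(Z₀,…,Z_{n−1})]`
    (g : Z → ℝ)
    (hg : ∀ z, g z = ∫ ω, (⨆ h : H,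
      |(1 / (n : ℝ)) * ∑ i ∈ range n, L h (itr z i ω) - ∫ w, L h w ∂π|) ∂P) :
    ∀ z z' : Z, |g z - g z'| ≤ ℓH * dist z z' := by
  have hnR : (0:ℝ) < n := by exact_mod_cast hn
  have hninv : (0:ℝ) ≤ 1 / n := by positivity
  -- measurability of the chain
  have hitrmeas : ∀ (z : Z) (i : ℕ), Measurable (fun ω => itr z i ω) := by
    intro z i
    induction i with
    | zero => simpa [hitr0] using (measurable_const : Measurable fun _ : Ω => z)
    | succ k ih =>
      have : (fun ω => itr z (k+1) ω)
          = (fun ω => Function.uncurry F (itr z k ω, ϑ k ω)) := by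
        funext ω; simp [hitrrec, Function.uncurry]
      rw [this]
      exact hF.comp (ih.prodMk (hϑmeas k))
  -- integrability of L h with respect to π, and bounds on its integral
  have hLπint : ∀ h, Integrable (L h) π := by
    intro h
    refine (integrable_const ℓH).mono' (hLmeas h).aestronglyMeasurable ?_
    filter_upwards with w
    rw [Real.norm_eq_abs, abs_of_nonneg (hLbdd h w).1]
    exact (hLbdd h w).2
  have hπL0 : ∀ h, 0 ≤ ∫ w, L h w ∂π := fun h => integral_nonneg fun w => (hLbdd h w).1
  have hπL1 : ∀ h, ∫ w, L h w ∂π ≤ ℓH := by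
    intro h
    calc ∫ w, L h w ∂π ≤ ∫ _, ℓH ∂π :=
          integral_mono (hLπint h) (integrable_const ℓH) fun w => (hLbdd h w).2
      _ = ℓH := by simp
  -- the average is in [0, ℓH]
  have havg : ∀ (h : H) (u : Fin n → Z),
      (1 / (n:ℝ)) * ∑ i : Fin n, L h (u i) ∈ Set.Icc 0 ℓH := by
    intro h u
    constructor
    · exact mul_nonneg hninv (Finset.sum_nonneg fun i _ => (hLbdd h (u i)).1)
    · have : ∑ i : Fin n, L h (u i) ≤ ∑ _i : Fin n, ℓH :=
        Finset.sum_le_sum fun i _ => (hLbdd h (u i)).2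
      have h2 : ∑ _i : Fin n, ℓH = n * ℓH := by simp [mul_comm]
      calc (1 / (n:ℝ)) * ∑ i : Fin n, L h (u i) ≤ (1 / (n:ℝ)) * (n * ℓH) := by
            apply mul_le_mul_of_nonneg_left _ hninv; rw [← h2]; exact this
        _ = ℓH := by field_simp
  -- the function Φ on n-tuples
  set Φ : (Fin n → Z) → ℝ := fun u => ⨆ h : H,
      |(1 / (n:ℝ)) * ∑ i : Fin n, L h (u i) - ∫ w, L h w ∂π| with hΦdef
  have htermbdd : ∀ (h : H) (u : Fin n → Z),
      |(1 / (n:ℝ)) * ∑ i : Fin n, L h (u i) - ∫ w, L h w ∂π| ≤ ℓH := by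
    intro h u
    have h1 := havg h u
    have h2 := hπL0 h
    have h3 := hπL1 h
    rw [abs_sub_le_iff]
    constructor <;> [skip; skip] <;> cases h1 with
    | intro ha hb => linarith
  have hbdd : ∀ u : Fin n → Z, BddAbove (Set.range fun h : H =>
      |(1 / (n:ℝ)) * ∑ i : Fin n, L h (u i) - ∫ w, L h w ∂π|) := by
    intro u
    exact ⟨ℓH, by rintro x ⟨h, rfl⟩; exact htermbdd h u⟩
  -- per-h difference bound
  have hstep : ∀ (h : H) (u v : Fin n → Z),
      |((1 / (n:ℝ)) * ∑ i : Fin n, L h (u i) - ∫ w, L h w ∂π)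
        - ((1 / (n:ℝ)) * ∑ i : Fin n, L h (v i) - ∫ w, L h w ∂π)|
        ≤ (1 / (n:ℝ)) * ∑ i : Fin n, ℓH * dist (u i) (v i) := by
    intro h u v
    have h1 : ((1 / (n:ℝ)) * ∑ i : Fin n, L h (u i) - ∫ w, L h w ∂π)
        - ((1 / (n:ℝ)) * ∑ i : Fin n, L h (v i) - ∫ w, L h w ∂π)
        = (1 / (n:ℝ)) * ∑ i : Fin n, (L h (u i) - L h (v i)) := by
      rw [Finset.sum_sub_distrib]; ring
    rw [h1, abs_mul, abs_of_nonneg hninv]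
    apply mul_le_mul_of_nonneg_left _ hninv
    calc |∑ i : Fin n, (L h (u i) - L h (v i))| ≤ ∑ i : Fin n, |L h (u i) - L h (v i)| :=
          Finset.abs_sum_le_sum_abs _ _
      _ ≤ ∑ i : Fin n, ℓH * dist (u i) (v i) :=
          Finset.sum_le_sum fun i _ => hLlip h (u i) (v i)
  -- Φ is Lipschitz hence continuous hence measurable
  have hΦlip : ∀ u v : Fin n → Z, |Φ u - Φ v| ≤ ℓH * dist u v := by
    intro u v
    refine le_trans (abs_ciSup_sub_ciSup_le (hbdd u) (hbdd v)
      (fun h => le_trans (abs_abs_sub_abs_le_abs_sub _ _) (hstep h u v))) ?_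
    have h1 : ∑ i : Fin n, ℓH * dist (u i) (v i) ≤ ∑ _i : Fin n, ℓH * dist u v :=
      Finset.sum_le_sum fun i _ =>
        mul_le_mul_of_nonneg_left (dist_le_pi_dist u v i) hℓHpos.le
    have h2 : ∑ _i : Fin n, ℓH * dist u v = n * (ℓH * dist u v) := by simp [mul_comm]
    calc (1 / (n:ℝ)) * ∑ i : Fin n, ℓH * dist (u i) (v i)
        ≤ (1 / (n:ℝ)) * (n * (ℓH * dist u v)) := by
          apply mul_le_mul_of_nonneg_left _ hninv; rw [← h2]; exact h1
      _ = ℓH * dist u v := by field_simp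
  have hΦcont : Continuous Φ := by
    refine (LipschitzWith.of_dist_le_mul (K := ℓH.toNNReal) fun u v => ?_).continuous
    rw [Real.dist_eq, Real.coe_toNNReal _ hℓHpos.le]
    exact hΦlip u v
  have hΦmeas : Measurable Φ := hΦcont.measurable
  -- the integrand, rewritten through Φ
  have hrw : ∀ (z : Z) (ω : Ω),
      (⨆ h : H, |(1 / (n:ℝ)) * ∑ i ∈ range n, L h (itr z i ω) - ∫ w, L h w ∂π|)
      = Φ (fun i : Fin n => itr z i ω) := by
    intro z ω
    simp only [hΦdef]
    congr 1
    funext h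
    rw [Finset.sum_range fun i => L h (itr z i ω)]
  have hfmeas : ∀ z : Z, Measurable fun ω => Φ (fun i : Fin n => itr z i ω) := by
    intro z
    exact hΦmeas.comp (measurable_pi_lambda _ fun i => hitrmeas z i)
  have hΦbdd : ∀ u : Fin n → Z, |Φ u| ≤ ℓH := by
    intro u
    rw [abs_le]
    constructor
    · have h0 : (0:ℝ) ≤ Φ u := by
        obtain ⟨h⟩ := ‹Nonempty H›
        exact le_trans (abs_nonneg _) (le_ciSup (hbdd u) h)
      linarith
    · exact ciSup_le fun h => htermbdd h u
  have hfint : ∀ z : Z, Integrable (fun ω => Φ (fun i : Fin n => itr z i ω)) P := by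
    intro z
    refine (integrable_const ℓH).mono' (hfmeas z).aestronglyMeasurable ?_
    filter_upwards with ω
    rw [Real.norm_eq_abs]; exact hΦbdd _
  -- contraction bound on distances
  intro z z'
  have hdist : ∀ (i : ℕ) (ω : Ω), dist (itr z i ω) (itr z' i ω)
      ≤ (∏ j ∈ range i, ℓ (ϑ j ω)) * dist z z' := by
    intro i
    induction i with
    | zero => intro ω; simp [hitr0]
    | succ k ih =>
      intro ω
      rw [hitrrec, hitrrec]
      calc dist (F (itr z k ω) (ϑ k ω)) (F (itr z' k ω) (ϑ k ω))
          ≤ ℓ (ϑ k ω) * dist (itr z k ω) (itr z' k ω) := hlip _ _ _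
        _ ≤ ℓ (ϑ k ω) * ((∏ j ∈ range k, ℓ (ϑ j ω)) * dist z z') :=
            mul_le_mul_of_nonneg_left (ih ω) (hℓnonneg _)
        _ = (∏ j ∈ range (k+1), ℓ (ϑ j ω)) * dist z z' := by
            rw [Finset.prod_range_succ]; ring
  -- expectation of the product of the ℓ(ϑ_j)
  have hϑℓmeas : ∀ j, Measurable fun ω => ℓ (ϑ j ω) := fun j => hℓmeas.comp (hϑmeas j)
  have hℓcomp : iIndepFun
      (fun j => fun ω => ℓ (ϑ j ω)) P := hϑindep.comp (fun _ => ℓ) (fun _ => hℓmeas)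
  have hϑℓint : ∀ j, Integrable (fun ω => ℓ (ϑ j ω)) P := by
    intro j
    have h1 : Integrable ℓ (P.map (ϑ j)) := by rw [hϑlaw j]; exact hℓint
    exact (integrable_map_measure hℓmeas.aestronglyMeasurable
      (hϑmeas j).aemeasurable).mp h1
  have hϑℓval : ∀ j, ∫ ω, ℓ (ϑ j ω) ∂P = ℓF := by
    intro j
    rw [hℓF, ← hϑlaw j, integral_map (hϑmeas j).aemeasurable hℓmeas.aestronglyMeasurable]
  have hprod : ∀ i : ℕ, Integrable (fun ω => ∏ j ∈ range i, ℓ (ϑ j ω)) P ∧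
      ∫ ω, ∏ j ∈ range i, ℓ (ϑ j ω) ∂P = ℓF ^ i := by
    intro i
    induction i with
    | zero => simp
    | succ k ih =>
      have hindep : IndepFun (∏ j ∈ range k, fun ω => ℓ (ϑ j ω)) (fun ω => ℓ (ϑ k ω)) P :=
        hℓcomp.indepFun_prod_range_succ hϑℓmeas k
      have happ : (∏ j ∈ range k, fun ω => ℓ (ϑ j ω)) = fun ω => ∏ j ∈ range k, ℓ (ϑ j ω) := by
        funext ω; simp
      rw [happ] at hindep
      have hmul := hindep.integrable_mul ih.1 (hϑℓint k)
      have heq : ((fun ω => ∏ j ∈ range k, ℓ (ϑ j ω)) * fun ω => ℓ (ϑ k ω))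
          = fun ω => ∏ j ∈ range (k+1), ℓ (ϑ j ω) := by
        funext ω; simp [Finset.prod_range_succ]
      constructor
      · rw [← heq]; exact hmul
      · have := hindep.integral_mul_eq_mul_integral ih.1.1 (hϑℓint k).1
        rw [heq] at this
        rw [this, ih.2, hϑℓval k, pow_succ]
  have hℓF0 : 0 ≤ ℓF := hℓF ▸ integral_nonneg hℓnonneg
  have hpow : ∀ i : ℕ, ℓF ^ i ≤ 1 := fun i => pow_le_one₀ hℓF0 hcontr.le
  -- integrability of the distance functions
  have hdistmeas : ∀ i : ℕ, Measurable fun ω => dist (itr z i ω) (itr z' i ω) :=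
    fun i => (hitrmeas z i).dist (hitrmeas z' i)
  have hdistint : ∀ i : ℕ, Integrable (fun ω => dist (itr z i ω) (itr z' i ω)) P := by
    intro i
    refine (integrable_const (1:ℝ)).mono' (hdistmeas i).aestronglyMeasurable ?_
    filter_upwards with ω
    rw [Real.norm_eq_abs, abs_of_nonneg dist_nonneg]
    exact hdbdd _ _
  have hdistval : ∀ i : ℕ, ∫ ω, dist (itr z i ω) (itr z' i ω) ∂P ≤ ℓF ^ i * dist z z' := by
    intro i
    calc ∫ ω, dist (itr z i ω) (itr z' i ω) ∂P
        ≤ ∫ ω, (∏ j ∈ range i, ℓ (ϑ j ω)) * dist z z' ∂P :=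
          integral_mono (hdistint i) ((hprod i).1.mul_const _) (fun ω => hdist i ω)
      _ = ℓF ^ i * dist z z' := by rw [integral_mul_const, (hprod i).2]
  -- the comparison function c
  set c : Ω → ℝ := fun ω => (1 / (n:ℝ)) * ∑ i : Fin n, ℓH * dist (itr z (i:ℕ) ω) (itr z' (i:ℕ) ω)
    with hcdef
  have hcint : Integrable c P := by
    apply Integrable.const_mul
    apply integrable_finset_sum
    intro i _
    exact (hdistint i).const_mul ℓH
  have hptwise : ∀ ω : Ω, |Φ (fun i : Fin n => itr z i ω) - Φ (fun i : Fin n => itr z' i ω)|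
      ≤ c ω := fun ω =>
    abs_ciSup_sub_ciSup_le (hbdd _) (hbdd _)
      (fun h => le_trans (abs_abs_sub_abs_le_abs_sub _ _) (hstep h _ _))
  have hcval : ∫ ω, c ω ∂P ≤ ℓH * dist z z' := by
    have h1 : ∫ ω, c ω ∂P = (1 / (n:ℝ)) * ∑ i : Fin n,
        ℓH * ∫ ω, dist (itr z (i:ℕ) ω) (itr z' (i:ℕ) ω) ∂P := by
      rw [hcdef]
      simp only [integral_const_mul]
      congr 1
      rw [integral_finset_sum (univ : Finset (Fin n))
        (fun (i : Fin n) _ => ((hdistint (i:ℕ)).const_mul ℓH))]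
      congr 1; funext i
      rw [integral_const_mul]
    rw [h1]
    have h2 : ∑ i : Fin n, ℓH * ∫ ω, dist (itr z (i:ℕ) ω) (itr z' (i:ℕ) ω) ∂P
        ≤ ∑ _i : Fin n, ℓH * dist z z' := by
      refine Finset.sum_le_sum fun i _ => ?_
      calc ℓH * ∫ ω, dist (itr z (i:ℕ) ω) (itr z' (i:ℕ) ω) ∂P
          ≤ ℓH * (ℓF ^ (i:ℕ) * dist z z') :=
            mul_le_mul_of_nonneg_left (hdistval i) hℓHpos.le
        _ ≤ ℓH * (1 * dist z z') := by
            apply mul_le_mul_of_nonneg_left _ hℓHpos.le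
            exact mul_le_mul_of_nonneg_right (hpow i) dist_nonneg
        _ = ℓH * dist z z' := by ring
    have h3 : ∑ _i : Fin n, ℓH * dist z z' = n * (ℓH * dist z z') := by simp [mul_comm]
    calc (1 / (n:ℝ)) * ∑ i : Fin n, ℓH * ∫ ω, dist (itr z (i:ℕ) ω) (itr z' (i:ℕ) ω) ∂P
        ≤ (1 / (n:ℝ)) * (n * (ℓH * dist z z')) := by
          apply mul_le_mul_of_nonneg_left _ hninv; rw [← h3]; exact h2
      _ = ℓH * dist z z' := by field_simp
  -- final computation
  rw [hg z, hg z']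
  simp only [fun ω => hrw z ω, fun ω => hrw z' ω]
  rw [← integral_sub (hfint z) (hfint z')]
  calc |∫ ω, (Φ (fun i : Fin n => itr z i ω) - Φ (fun i : Fin n => itr z' i ω)) ∂P|
      ≤ ∫ ω, |Φ (fun i : Fin n => itr z i ω) - Φ (fun i : Fin n => itr z' i ω)| ∂P := by
        simpa [Real.norm_eq_abs] using
          norm_integral_le_integral_norm
            (fun ω => Φ (fun i : Fin n => itr z i ω) - Φ (fun i : Fin n => itr z' i ω)) (μ := P)
    _ ≤ ∫ ω, c ω ∂P :=
        integral_mono ((hfint z).sub (hfint z')).abs hcint hptwise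
    _ ≤ ℓH * dist z z' := hcval
end
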